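/- The (ℓ+1)×(ℓ+1) matrix M whose rows are m₀ = (1, S₁, S₂, ..., S_ℓ) and m_i = (0,...,0, G_i, 0,...,0) (with G_i in position i) for i = 1,...,ℓ, has rows forming a basis of the F[x]-module of all vectors (λ, ω₁,...,ω_ℓ) ∈ F[x]^{ℓ+1} with λ·S_i ≡ ω_i (mod G_i) for all i. -/

import Mathlib

open Polynomial

noncomputable section

variable {F : Type*} [Field F]

/-- The degree of a vector of polynomials: maximum of the coordinate degrees. -/
def vecDeg {n : ℕ} (v : Fin n → Polynomial F) : WithBot ℕ :=
  Finset.univ.sup fun j => (v j).degree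

/-- The degree of a vector, as a natural number. -/
def vecDegNat {n : ℕ} (v : Fin n → Polynomial F) : ℕ :=
  Finset.univ.sup fun j => (v j).natDegree

/-- The leading position of a vector: the largest index attaining the degree. -/
def leadPos {n : ℕ} (v : Fin n → Polynomial F) : ℕ :=
  (Finset.univ.filter fun j => (v j).degree = vecDeg v).sup fun j => (j : ℕ)

/-- The value function val(v) = n * deg v + LP(v). -/
def vecVal {n : ℕ} (v : Fin n → Polynomial F) : ℕ :=
  n * vecDegNat v + leadPos v

/-- The weight-embedding map Φ. -/
def PhiW (ν : ℕ) {n : ℕ} (w : Fin n → ℕ) (v : Fin n → Polynomial F) :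
    Fin n → Polynomial F :=
  fun j => X ^ (w j) * (Polynomial.expand F ν (v j))

/-- The rows of the canonical basis matrix M. -/
def rowBasisM (ℓ : ℕ) (S G : Fin ℓ → Polynomial F) :
    Fin (ℓ+1) → Fin (ℓ+1) → Polynomial F :=
  fun i => Fin.cases (Fin.cons 1 S) (fun i' => fun j => if j = i'.succ then G i' else 0) i


lemma sum_apply_zero (ℓ : ℕ) (S G : Fin ℓ → Polynomial F) (g : Fin (ℓ+1) → Polynomial F) :
    (∑ i, g i • rowBasisM ℓ S G i) 0 = g 0 := by
  simp [rowBasisM, Fin.sum_univ_succ, Finset.sum_apply]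
  exact Finset.sum_eq_zero fun x _ => if_neg (Fin.succ_ne_zero x).symm

lemma sum_apply_succ (ℓ : ℕ) (S G : Fin ℓ → Polynomial F) (g : Fin (ℓ+1) → Polynomial F)
    (j : Fin ℓ) :
    (∑ i, g i • rowBasisM ℓ S G i) j.succ = g 0 * S j + g j.succ * G j := by
  simp [rowBasisM, Fin.sum_univ_succ, Finset.sum_apply, Fin.succ_inj, Finset.sum_ite_eq]

theorem stmt1 (ℓ : ℕ) (hℓ : 0 < ℓ) (S G : Fin ℓ → Polynomial F) (hG : ∀ i, G i ≠ 0) :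
    LinearIndependent (Polynomial F) (rowBasisM ℓ S G) ∧
      (Submodule.span (Polynomial F) (Set.range (rowBasisM ℓ S G)) :
          Set (Fin (ℓ+1) → Polynomial F)) =
        {v | ∀ i : Fin ℓ, G i ∣ v 0 * S i - v i.succ} := by
  constructor
  · rw [Fintype.linearIndependent_iff]
    intro g hg
    have h0 : g 0 = 0 := by
      have := congrFun hg 0
      rwa [sum_apply_zero] at this
    intro i
    induction i using Fin.cases with
    | zero => exact h0
    | succ j =>
      have hj := congrFun hg j.succ
      rw [sum_apply_succ, h0, zero_mul, zero_add] at hj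
      simp only [Pi.zero_apply] at hj
      exact (mul_eq_zero.mp hj).resolve_right (hG j)
  · ext v
    simp only [SetLike.mem_coe, Submodule.mem_span_range_iff_exists_fun (Polynomial F), Set.mem_setOf_eq]
    constructor
    · rintro ⟨c, rfl⟩ i
      rw [sum_apply_zero, sum_apply_succ]
      exact ⟨-(c i.succ), by ring⟩
    · intro h
      choose q hq using h
      refine ⟨Fin.cons (v 0) (fun i => -(q i)), funext fun j => ?_⟩
      induction j using Fin.cases with
      | zero => rw [sum_apply_zero]; simp
      | succ j =>
        rw [sum_apply_succ]
        simp only [Fin.cons_zero, Fin.cons_succ]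
        linear_combination hq j
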